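/- Let X be a relatively uniformly complete Archimedean vector lattice, Y a sublattice, and (x_k) a sequence in Y converging relatively uniformly in X to some x ∈ X. Then x lies in the uniform adherence A of Y in X, and x_k → x relatively uniformly in A (i.e., with a regulator belonging to A). -/

import Mathlib

open Filter Set

section Defs

variable (X : Type*) [Lattice X] [AddCommGroup X] [Module ℝ X]

/-- Archimedean property for a vector lattice. -/
def VLArchimedean : Prop := ∀ x y : X, (∀ n : ℕ, n • x ≤ y) → x ≤ 0

variable {X}

/-- `Y` is a sublattice: a linear subspace closed under `⊔`. -/
def IsVLSublattice (Y : Set X) : Prop :=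
  (0 : X) ∈ Y ∧ (∀ a ∈ Y, ∀ b ∈ Y, a + b ∈ Y) ∧
    (∀ (c : ℝ), ∀ a ∈ Y, c • a ∈ Y) ∧ (∀ a ∈ Y, ∀ b ∈ Y, a ⊔ b ∈ Y)

/-- `Y` is majorizing in `X`. -/
def Majorizing (Y : Set X) : Prop := ∀ x : X, 0 ≤ x → ∃ y ∈ Y, x ≤ y

/-- Relative uniform convergence of a sequence with regulator `e`. -/
def RUTendsto (x : ℕ → X) (l e : X) : Prop :=
  0 ≤ e ∧ ∀ ε : ℝ, 0 < ε → ∃ N, ∀ n ≥ N, |x n - l| ≤ ε • e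

/-- Relative uniform Cauchy sequence with regulator `e`. -/
def RUCauchy (x : ℕ → X) (e : X) : Prop :=
  0 ≤ e ∧ ∀ ε : ℝ, 0 < ε → ∃ N, ∀ n ≥ N, ∀ m ≥ N, |x n - x m| ≤ ε • e

/-- Relative uniform convergence of a net with regulator `e`. -/
def RUTendstoNet {ι : Type*} [Preorder ι] (x : ι → X) (l e : X) : Prop :=
  0 ≤ e ∧ ∀ ε : ℝ, 0 < ε → ∃ α₀, ∀ α ≥ α₀, |x α - l| ≤ ε • e

/-- Relative uniform Cauchy net with regulator `e`. -/
def RUCauchyNet {ι : Type*} [Preorder ι] (x : ι → X) (e : X) : Prop :=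
  0 ≤ e ∧ ∀ ε : ℝ, 0 < ε → ∃ α₀, ∀ α ≥ α₀, ∀ β ≥ α₀, |x α - x β| ≤ ε • e

/-- Uniform adherence of a set: all relative uniform limits of sequences from `A`. -/
def uAdh (A : Set X) : Set X :=
  {l | ∃ x : ℕ → X, (∀ n, x n ∈ A) ∧ ∃ e, RUTendsto x l e}

/-- `A` is uniformly closed. -/
def RUClosed (A : Set X) : Prop := uAdh A ⊆ A

/-- Uniform closure: the least uniformly closed superset of `A`. -/
def uClosure (A : Set X) : Set X := ⋂₀ {B : Set X | A ⊆ B ∧ RUClosed B}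

variable (X)

/-- Relative uniform completeness (for sequences). -/
def RUComplete : Prop :=
  ∀ x : ℕ → X, (∃ e, RUCauchy x e) → ∃ l e, RUTendsto x l e

variable {X}

/-- Relative uniform completeness of a sublattice `Y` (regulators taken in `Y`). -/
def RUCompleteIn (Y : Set X) : Prop :=
  ∀ x : ℕ → X, (∀ n, x n ∈ Y) → (∃ e ∈ Y, RUCauchy x e) →
    ∃ l ∈ Y, ∃ e ∈ Y, RUTendsto x l e

/-- An (order) ideal of a vector lattice: a solid linear subspace. -/
def IsVLIdeal (I : Set X) : Prop :=
  (0 : X) ∈ I ∧ (∀ a ∈ I, ∀ b ∈ I, a + b ∈ I) ∧ (∀ (c : ℝ), ∀ a ∈ I, c • a ∈ I) ∧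
    ∀ x : X, ∀ y ∈ I, |x| ≤ |y| → x ∈ I

/-- The ideal generated by a set. -/
def idealGen (Y : Set X) : Set X := ⋂₀ {I : Set X | Y ⊆ I ∧ IsVLIdeal I}

/-- `B` is a projection band: an ideal along which the space decomposes. -/
def IsProjectionBand (B : Set X) : Prop :=
  IsVLIdeal B ∧ ∀ x : X, ∃ b ∈ B, ∃ d : X, (∀ y ∈ B, |d| ⊓ |y| = 0) ∧ x = b + d

end Defs

section MyAux
variable {X : Type*} [Lattice X] [AddCommGroup X] [Module ℝ X]
  [CovariantClass X X (· + ·) (· ≤ ·)] [PosSMulMono ℝ X]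

private lemma smulR_le {c d : ℝ} (h : c ≤ d) {v : X} (hv : 0 ≤ v) : c • v ≤ d • v := by
  have h0 : 0 ≤ d • v - c • v := by rw [← sub_smul]; exact smul_nonneg (by linarith) hv
  exact sub_nonneg.mp h0

private lemma le_zero_of_eps (harch : VLArchimedean X) {a f : X} (hf : 0 ≤ f)
    (h : ∀ ε : ℝ, 0 < ε → a ≤ ε • f) : a ≤ 0 := by
  refine harch a f fun n => ?_
  match n with
  | 0 => simpa using hf
  | (m+1) =>
    have h1 := h (1/(m+1 : ℝ)) (by positivity)
    have h2 := smul_le_smul_of_nonneg_left h1 (show (0:ℝ) ≤ (m+1 : ℝ) by positivity)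
    rw [smul_smul, mul_one_div_cancel (by positivity), one_smul] at h2
    calc (m+1 : ℕ) • a = ((m+1 : ℕ) : ℝ) • a := (Nat.cast_smul_eq_nsmul ℝ _ _).symm
      _ ≤ f := by push_cast; exact h2

private lemma neg_memY {Y : Set X} (hY : IsVLSublattice Y) {a : X} (ha : a ∈ Y) : -a ∈ Y := by
  have := hY.2.2.1 (-1) a ha; rwa [neg_one_smul] at this

private lemma abs_memY {Y : Set X} (hY : IsVLSublattice Y) {a : X} (ha : a ∈ Y) : |a| ∈ Y :=
  hY.2.2.2 a ha (-a) (neg_memY hY ha)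

private lemma sub_memY {Y : Set X} (hY : IsVLSublattice Y) {a b : X} (ha : a ∈ Y) (hb : b ∈ Y) :
    a - b ∈ Y := by
  rw [sub_eq_add_neg]; exact hY.2.1 a ha _ (neg_memY hY hb)

private lemma sum_memY {Y : Set X} (hY : IsVLSublattice Y) {ι : Type*} (t : Finset ι) (g : ι → X)
    (hg : ∀ i ∈ t, g i ∈ Y) : ∑ i ∈ t, g i ∈ Y := by
  induction t using Finset.cons_induction with
  | empty => simpa using hY.1
  | cons i t hi ih =>
    rw [Finset.sum_cons]
    exact hY.2.1 _ (hg i (Finset.mem_cons_self _ _)) _ (ih fun j hj => hg j (Finset.mem_cons.2 (Or.inr hj)))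

private lemma sum_le_sum'' {ι : Type*} {t : Finset ι} {f g : ι → X} (h : ∀ i ∈ t, f i ≤ g i) :
    ∑ i ∈ t, f i ≤ ∑ i ∈ t, g i := by
  induction t using Finset.cons_induction with
  | empty => simp
  | cons i t hi ih =>
    rw [Finset.sum_cons, Finset.sum_cons]
    exact add_le_add (h i (Finset.mem_cons_self _ _))
      (ih fun j hj => h j (Finset.mem_cons.2 (Or.inr hj)))

private lemma sum_nonneg'' {ι : Type*} {t : Finset ι} {f : ι → X} (h : ∀ i ∈ t, 0 ≤ f i) :
    0 ≤ ∑ i ∈ t, f i := by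
  have := sum_le_sum'' (t := t) (f := fun _ => (0:X)) (g := f) h
  simpa using this

private lemma single_le_sum'' {ι : Type*} [DecidableEq ι] {t : Finset ι} {f : ι → X} (h : ∀ i ∈ t, 0 ≤ f i)
    {i : ι} (hi : i ∈ t) : f i ≤ ∑ j ∈ t, f j := by
  rw [← Finset.add_sum_erase _ f hi]
  exact le_add_of_nonneg_right (sum_nonneg'' fun j hj => h j (Finset.mem_of_mem_erase hj))

private lemma abs_sum_le' {ι : Type*} (t : Finset ι) (g : ι → X) :
    |∑ i ∈ t, g i| ≤ ∑ i ∈ t, |g i| := by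
  induction t using Finset.cons_induction with
  | empty => simp
  | cons i t hi ih =>
    rw [Finset.sum_cons, Finset.sum_cons]
    exact (abs_add_le _ _).trans (add_le_add le_rfl ih)

/-- auxiliary strictly increasing index sequence -/
def regSeq (N : ℕ → ℕ) : ℕ → ℕ
  | 0 => N 0
  | (k+1) => max (N (k+1)) (regSeq N k + 1)

lemma regSeq_ge (N : ℕ → ℕ) : ∀ k, N k ≤ regSeq N k
  | 0 => le_refl _
  | (k+1) => le_max_left _ _

lemma regSeq_strictMono (N : ℕ → ℕ) : StrictMono (regSeq N) :=
  strictMono_nat_of_lt_succ fun k => lt_of_lt_of_le (Nat.lt_succ_self _) (le_max_right _ _)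

end MyAux

theorem ru_limit_lies_in_adherence_with_regulator_in_adherence
    {X : Type*} [Lattice X] [AddCommGroup X] [Module ℝ X]
    [CovariantClass X X (· + ·) (· ≤ ·)] [PosSMulMono ℝ X]
    (harch : VLArchimedean X) (hcomp : RUComplete X)
    {Y : Set X} (hY : IsVLSublattice Y)
    (x : ℕ → X) (hx : ∀ k, x k ∈ Y)
    {l : X} (h : ∃ e, RUTendsto x l e) :
    l ∈ uAdh Y ∧ ∃ e ∈ uAdh Y, RUTendsto x l e := by
  obtain ⟨e, he0, hconv⟩ := h
  refine ⟨⟨x, hx, e, he0, hconv⟩, ?_⟩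
  -- choose thresholds
  have hchoice : ∀ k : ℕ, ∃ N, ∀ m ≥ N, |x m - l| ≤ ((1/4 : ℝ)^k) • e :=
    fun k => hconv ((1/4)^k) (by positivity)
  choose N hN using hchoice
  set n : ℕ → ℕ := regSeq N with hn
  have hmono : StrictMono n := regSeq_strictMono N
  have hblk : ∀ k : ℕ, ∀ m : ℕ, n k ≤ m → |x m - l| ≤ ((1/4 : ℝ)^k) • e :=
    fun k m hm => hN k m (le_trans (regSeq_ge N k) hm)
  -- block suprema
  have hne : ∀ k : ℕ, (Finset.Icc (n k) (n (k+1))).Nonempty :=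
    fun k => ⟨n k, Finset.mem_Icc.2 ⟨le_refl _, (hmono (Nat.lt_succ_self k)).le⟩⟩
  set b : ℕ → X := fun k => (Finset.Icc (n k) (n (k+1))).sup' (hne k) (fun m => |x m - x (n k)|)
    with hb
  have hbY : ∀ k, b k ∈ Y := fun k =>
    Finset.sup'_mem Y hY.2.2.2 _ (hne k) _
      (fun m _ => abs_memY hY (sub_memY hY (hx m) (hx (n k))))
  have hb_ge : ∀ k, ∀ m ∈ Finset.Icc (n k) (n (k+1)), |x m - x (n k)| ≤ b k := by
    intro k m hm
    simp only [hb]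
    exact Finset.le_sup' (fun m => |x m - x (n k)|) hm
  have hb0 : ∀ k, 0 ≤ b k := by
    intro k
    have := hb_ge k (n k) (Finset.mem_Icc.2 ⟨le_refl _, (hmono (Nat.lt_succ_self k)).le⟩)
    simpa using this
  have hbe : ∀ k, b k ≤ (2 * (1/4 : ℝ)^k) • e := by
    intro k
    simp only [hb]
    refine Finset.sup'_le _ _ fun m hm => ?_
    obtain ⟨hm1, _⟩ := Finset.mem_Icc.1 hm
    have e1 : x m - x (n k) = (x m - l) + (l - x (n k)) := by abel
    calc |x m - x (n k)| ≤ |x m - l| + |l - x (n k)| := by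
            rw [e1]; exact abs_add_le _ _
      _ ≤ ((1/4 : ℝ)^k) • e + ((1/4 : ℝ)^k) • e := by
            refine add_le_add (hblk k m hm1) ?_
            rw [abs_sub_comm]; exact hblk k (n k) (le_refl _)
      _ = (2 * (1/4 : ℝ)^k) • e := by rw [← add_smul]; ring_nf
  -- partial sums
  set s : ℕ → X := fun m => ∑ k ∈ Finset.range (m+1), (2:ℝ)^k • b k with hs
  have hsY : ∀ m, s m ∈ Y := fun m =>
    sum_memY hY _ _ (fun k _ => hY.2.2.1 _ _ (hbY k))
  have hsmono : Monotone s := by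
    refine monotone_nat_of_le_succ fun m => ?_
    have : s (m+1) = s m + (2:ℝ)^(m+1) • b (m+1) := Finset.sum_range_succ _ _
    rw [this]
    exact le_add_of_nonneg_right (smul_nonneg (by positivity) (hb0 _))
  have hterm_le : ∀ k : ℕ, (2:ℝ)^k • b k ≤ (2 * (1/2 : ℝ)^k) • e := by
    intro k
    have := smul_le_smul_of_nonneg_left (hbe k) (show (0:ℝ) ≤ 2^k by positivity)
    rw [smul_smul] at this
    have heq : (2:ℝ)^k * (2 * (1/4)^k) = 2 * (1/2)^k := by
      rw [show ((1:ℝ)/2) = 2 * (1/4) by norm_num, mul_pow]; ring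
    rwa [heq] at this
  have hgeo : ∀ a c : ℕ, (∑ k ∈ Finset.Ico a c, 2 * (1/2 : ℝ)^k) ≤ 4 * (1/2)^a := by
    intro a c
    rw [Finset.sum_Ico_eq_sum_range]
    have : ∀ i : ℕ, 2 * (1/2 : ℝ)^(a+i) = (2 * (1/2)^a) * (1/2)^i := fun i => by
      rw [pow_add]; ring
    simp_rw [this, ← Finset.mul_sum]
    have h2 := sum_geometric_two_le (c - a)
    have hpos : (0:ℝ) ≤ 2 * (1/2)^a := by positivity
    nlinarith [pow_pos (show (0:ℝ) < 1/2 by norm_num) a]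
  -- s is RU-Cauchy with regulator e
  have hdiff : ∀ p q : ℕ, q ≤ p → s p - s q ≤ (4 * (1/2 : ℝ)^(q+1)) • e := by
    intro p q hqp
    have e2 : s p - s q = ∑ k ∈ Finset.Ico (q+1) (p+1), (2:ℝ)^k • b k :=
      (Finset.sum_Ico_eq_sub _ (by omega)).symm
    rw [e2]
    calc ∑ k ∈ Finset.Ico (q+1) (p+1), (2:ℝ)^k • b k
        ≤ ∑ k ∈ Finset.Ico (q+1) (p+1), (2 * (1/2 : ℝ)^k) • e :=
          sum_le_sum'' fun k _ => hterm_le k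
      _ = (∑ k ∈ Finset.Ico (q+1) (p+1), 2 * (1/2 : ℝ)^k) • e := (Finset.sum_smul).symm
      _ ≤ (4 * (1/2 : ℝ)^(q+1)) • e := smulR_le (hgeo _ _) he0
  have hcauchy : RUCauchy s e := by
    refine ⟨he0, fun ε hε => ?_⟩
    obtain ⟨K, hK⟩ := exists_pow_lt_of_lt_one (show (0:ℝ) < ε/2 by linarith)
      (show (1:ℝ)/2 < 1 by norm_num)
    refine ⟨K, fun p hp q hq => ?_⟩
    -- wlog
    have key : ∀ p q : ℕ, K ≤ q → q ≤ p → |s p - s q| ≤ ε • e := by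
      intro p q hKq hqp
      have h1 : 0 ≤ s p - s q := sub_nonneg.2 (hsmono hqp)
      rw [abs_of_nonneg h1]
      refine (hdiff p q hqp).trans (smulR_le ?_ he0)
      have h7 : ((1:ℝ)/2)^(q+1) ≤ (1/2)^(K+1) :=
        pow_le_pow_of_le_one (by norm_num) (by norm_num) (by omega)
      have h8 : ((1:ℝ)/2)^(K+1) = (1/2)^K * (1/2) := pow_succ _ _
      nlinarith
    rcases le_total q p with hqp | hpq
    · exact key p q hq hqp
    · rw [abs_sub_comm]; exact key q p hp hpq
  -- apply completeness
  obtain ⟨u, f, hf0, hfu⟩ := hcomp s ⟨e, hcauchy⟩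
  -- s m ≤ u
  have hsu : ∀ m, s m ≤ u := by
    intro m
    have : s m - u ≤ 0 := by
      refine le_zero_of_eps harch hf0 fun ε hε => ?_
      obtain ⟨K, hK⟩ := hfu ε hε
      have h1 := hK (max m K) (le_max_right _ _)
      have h2 : s m ≤ s (max m K) := hsmono (le_max_left _ _)
      calc s m - u ≤ s (max m K) - u := by exact sub_le_sub_right h2 u
        _ ≤ |s (max m K) - u| := le_abs_self _
        _ ≤ ε • f := h1
    exact sub_nonpos.mp this
  have hu0 : 0 ≤ u := by
    refine le_trans ?_ (hsu 0)
    have : s 0 = (2:ℝ)^0 • b 0 := by simp [hs]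
    rw [this]
    exact smul_nonneg (by positivity) (hb0 0)
  have huY : u ∈ uAdh Y := ⟨s, hsY, f, hf0, hfu⟩
  -- key1: block elements controlled by u
  have key1 : ∀ k m : ℕ, m ∈ Finset.Icc (n k) (n (k+1)) → |x m - x (n k)| ≤ ((1/2 : ℝ)^k) • u := by
    intro k m hm
    have h1 : (2:ℝ)^k • b k ≤ s k :=
      single_le_sum'' (f := fun j => (2:ℝ)^j • b j)
        (fun j _ => smul_nonneg (by positivity) (hb0 j)) (Finset.self_mem_range_succ k)
    have h2 : (2:ℝ)^k • |x m - x (n k)| ≤ u :=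
      le_trans (smul_le_smul_of_nonneg_left (hb_ge k m hm) (by positivity)) (h1.trans (hsu k))
    have h3 := smul_le_smul_of_nonneg_left h2 (show (0:ℝ) ≤ (1/2)^k by positivity)
    rwa [smul_smul, show ((1:ℝ)/2)^k * 2^k = 1 by rw [← mul_pow]; norm_num, one_smul] at h3
  -- key2: |x (n k) - l| ≤ 2 (1/2)^k u
  have key2 : ∀ k : ℕ, |x (n k) - l| ≤ (2 * (1/2 : ℝ)^k) • u := by
    intro k
    have hmain : ∀ m : ℕ, k ≤ m →
        |x (n k) - x (n m)| ≤ (2 * (1/2 : ℝ)^k) • u := by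
      intro m hkm
      have hmk : k + (m - k) = m := by omega
      have tele : ∑ i ∈ Finset.range (m - k), (x (n (k + (i+1))) - x (n (k + i)))
          = x (n m) - x (n k) := by
        have t0 := Finset.sum_range_sub (fun i => x (n (k + i))) (m - k)
        simp only [hmk, Nat.add_zero] at t0
        exact t0
      have habs : |x (n k) - x (n m)| ≤
          ∑ i ∈ Finset.range (m - k), |x (n (k + (i+1))) - x (n (k + i))| := by
        rw [abs_sub_comm, ← tele]
        exact abs_sum_le' _ _
      have hterm : ∀ i ∈ Finset.range (m - k),
          |x (n (k + (i+1))) - x (n (k + i))| ≤ ((1/2 : ℝ)^(k+i)) • u := by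
        intro i _
        exact key1 (k+i) (n ((k+i)+1))
          (Finset.mem_Icc.2 ⟨(hmono (Nat.lt_succ_self _)).le, le_refl _⟩)
      calc |x (n k) - x (n m)|
          ≤ ∑ i ∈ Finset.range (m - k), |x (n (k + (i+1))) - x (n (k + i))| := habs
        _ ≤ ∑ i ∈ Finset.range (m - k), ((1/2 : ℝ)^(k+i)) • u :=
            sum_le_sum'' hterm
        _ = (∑ i ∈ Finset.range (m - k), (1/2 : ℝ)^(k+i)) • u := (Finset.sum_smul).symm
        _ ≤ (2 * (1/2 : ℝ)^k) • u := by
            refine smulR_le ?_ hu0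
            have h2 := sum_geometric_two_le (m - k)
            have : ∀ i : ℕ, ((1:ℝ)/2)^(k+i) = (1/2)^k * (1/2)^i := fun i => pow_add _ _ _
            simp_rw [this, ← Finset.mul_sum]
            nlinarith [pow_pos (show (0:ℝ) < 1/2 by norm_num) k]
    have : |x (n k) - l| - (2 * (1/2 : ℝ)^k) • u ≤ 0 := by
      refine le_zero_of_eps harch he0 fun ε hε => ?_
      obtain ⟨M, hM⟩ := exists_pow_lt_of_lt_one hε (show (1:ℝ)/4 < 1 by norm_num)
      set m := max k M with hm
      have hbound : |x (n k) - l| ≤ (2 * (1/2 : ℝ)^k) • u + ((1/4 : ℝ)^m) • e := by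
        calc |x (n k) - l| ≤ |x (n k) - x (n m)| + |x (n m) - l| := by
              have e1 : x (n k) - l = (x (n k) - x (n m)) + (x (n m) - l) := by abel
              rw [e1]; exact abs_add_le _ _
          _ ≤ (2 * (1/2 : ℝ)^k) • u + ((1/4 : ℝ)^m) • e :=
              add_le_add (hmain m (le_max_left _ _)) (hblk m _ (le_refl _))
      have h4 : ((1/4 : ℝ)^m) • e ≤ ε • e := by
        refine smulR_le ?_ he0
        calc ((1:ℝ)/4)^m ≤ (1/4)^M :=
              pow_le_pow_of_le_one (by norm_num) (by norm_num) (le_max_right _ _)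
          _ ≤ ε := hM.le
      calc |x (n k) - l| - (2 * (1/2 : ℝ)^k) • u
          ≤ ((2 * (1/2 : ℝ)^k) • u + ((1/4 : ℝ)^m) • e) - (2 * (1/2 : ℝ)^k) • u :=
            sub_le_sub_right hbound _
        _ = ((1/4 : ℝ)^m) • e := by abel
        _ ≤ ε • e := h4
    exact sub_nonpos.mp this
  -- final convergence with regulator u
  refine ⟨u, huY, hu0, fun ε hε => ?_⟩
  obtain ⟨K, hK⟩ := exists_pow_lt_of_lt_one (show (0:ℝ) < ε/3 by linarith)
    (show (1:ℝ)/2 < 1 by norm_num)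
  refine ⟨n K, fun m hm => ?_⟩
  -- find the block containing m
  have hKm : K ≤ m := le_trans (hmono.le_apply) hm
  set k := Nat.findGreatest (fun j => n j ≤ m) m with hk
  have hk1 : K ≤ k := Nat.le_findGreatest (P := fun j => n j ≤ m) (n := m) hKm hm
  have hk2 : n k ≤ m := Nat.findGreatest_spec (P := fun j => n j ≤ m) (n := m) hKm hm
  have hk3 : m ≤ n (k+1) := by
    by_contra hcon
    push_neg at hcon
    have h5 : k + 1 ≤ m := le_trans (hmono.le_apply) hcon.le
    have h6 : k + 1 ≤ k := Nat.le_findGreatest (P := fun j => n j ≤ m) (n := m) h5 hcon.le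
    omega
  have hxm : |x m - x (n k)| ≤ ((1/2 : ℝ)^k) • u :=
    key1 k m (Finset.mem_Icc.2 ⟨hk2, hk3⟩)
  calc |x m - l| ≤ |x m - x (n k)| + |x (n k) - l| := by
        have e1 : x m - l = (x m - x (n k)) + (x (n k) - l) := by abel
        rw [e1]; exact abs_add_le _ _
    _ ≤ ((1/2 : ℝ)^k) • u + (2 * (1/2 : ℝ)^k) • u := add_le_add hxm (key2 k)
    _ = (3 * (1/2 : ℝ)^k) • u := by rw [← add_smul]; ring_nf
    _ ≤ ε • u := by
        refine smulR_le ?_ hu0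
        have : ((1:ℝ)/2)^k ≤ (1/2)^K :=
          pow_le_pow_of_le_one (by norm_num) (by norm_num) hk1
        nlinarith
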